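/- Let 0 < T < π/2 and π/2 < φ_W < π − T (i.e., (φ_W, T) ∈ D₁ with φ_W ≠ π/2). Then F¹_{φ_W,T} has no roots in the open interval (0,1): F¹_{φ_W,T}(a) ≠ 0 for all a ∈ (0,1). -/

import Mathlib

open Real

/-- The determinant function
`F¹_{φ_W,T}(a) = -2a - a² sin(2aT) sin(2φ_W) - sin(2aT) sin(2φ_W) + 2a cos(2aT) cos(2φ_W)`. -/
noncomputable def F1 (φW T a : ℝ) : ℝ :=
  -2 * a - a ^ 2 * Real.sin (2 * a * T) * Real.sin (2 * φW)
    - Real.sin (2 * a * T) * Real.sin (2 * φW)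
    + 2 * a * Real.cos (2 * a * T) * Real.cos (2 * φW)

/-- `sin x / x` is (strictly) decreasing: if `0 < q < p ≤ π` then `q sin p < p sin q`. -/
lemma sinc_strict_anti {q p : ℝ} (hq : 0 < q) (hqp : q < p) (hp : p ≤ Real.pi) :
    q * Real.sin p < p * Real.sin q := by
  have hp0 : 0 < p := hq.trans hqp
  have h := strictConcaveOn_sin_Icc.2
    (Set.mem_Icc.2 ⟨le_rfl, Real.pi_pos.le⟩)
    (Set.mem_Icc.2 ⟨hp0.le, hp⟩) (ne_of_lt hp0)
    (show (0:ℝ) < 1 - q / p by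
      have : q / p < 1 := (div_lt_one hp0).2 hqp; linarith)
    (div_pos hq hp0) (show (1 - q / p) + q / p = 1 by ring)
  have hqe : (1 - q / p) • (0 : ℝ) + (q / p) • p = q := by
    field_simp
    simp only [smul_eq_mul, mul_zero, zero_add]
    field_simp
  rw [hqe, Real.sin_zero, smul_eq_mul, smul_eq_mul, mul_zero, zero_add] at h
  -- h : q / p * sin p < sin q
  calc q * Real.sin p = p * (q / p * Real.sin p) := by field_simp
    _ < p * Real.sin q := (mul_lt_mul_iff_right₀ hp0).2 h

theorem F1_no_roots_on_D1 (φW T : ℝ) (hT0 : 0 < T) (hT : T < Real.pi / 2)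
    (hφ1 : Real.pi / 2 < φW) (hφ2 : φW < Real.pi - T) :
    ∀ a ∈ Set.Ioo (0:ℝ) 1, F1 φW T a ≠ 0 := by
  intro a ha
  obtain ⟨ha0, ha1⟩ := ha
  have hπ := Real.pi_pos
  set x := a * T with hx
  have hx0 : 0 < x := mul_pos ha0 hT0
  have hxT : x < T := by rw [hx]; nlinarith
  -- basic sign facts
  have hc : Real.cos φW < 0 :=
    Real.cos_neg_of_pi_div_two_lt_of_lt hφ1 (by linarith)
  have hcT : -Real.cos φW < Real.cos T := by
    have h := Real.cos_lt_cos_of_nonneg_of_le_pi (le_of_lt hT0) (by linarith)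
      (show T < Real.pi - φW by linarith)
    rwa [Real.cos_pi_sub] at h
  have hsT : Real.sin T < Real.sin φW := by
    have h := Real.sin_lt_sin_of_lt_of_le_pi_div_two (by linarith) (by linarith)
      (show T < Real.pi - φW by linarith)
    rwa [Real.sin_pi_sub] at h
  have hsx : 0 < Real.sin x := Real.sin_pos_of_pos_of_lt_pi hx0 (by linarith)
  have hcx : 0 < Real.cos x := Real.cos_pos_of_mem_Ioo ⟨by linarith, by linarith⟩
  have hcT0 : 0 < Real.cos T := Real.cos_pos_of_mem_Ioo ⟨by linarith, hT⟩
  have hsT0 : 0 < Real.sin T := Real.sin_pos_of_pos_of_lt_pi hT0 (by linarith)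
  -- tan "convexity": sin x * cos T < a * (sin T * cos x)
  have hsinc := sinc_strict_anti (q := (1 - a) * T) (p := (1 + a) * T)
    (mul_pos (by linarith) hT0) (by nlinarith) (by nlinarith)
  have hexp1 : Real.sin ((1 + a) * T)
      = Real.sin x * Real.cos T + Real.cos x * Real.sin T := by
    rw [show (1 + a) * T = x + T by rw [hx]; ring, Real.sin_add]
  have hexp2 : Real.sin ((1 - a) * T)
      = Real.sin T * Real.cos x - Real.cos T * Real.sin x := by
    rw [show (1 - a) * T = T - x by rw [hx]; ring, Real.sin_sub]
  rw [hexp1, hexp2] at hsinc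
  have hkey' : 2 * (Real.sin x * Real.cos T) * T
      < 2 * (a * (Real.sin T * Real.cos x)) * T := by nlinarith [hsinc]
  have hkey : Real.sin x * Real.cos T < a * (Real.sin T * Real.cos x) := by
    have := lt_of_mul_lt_mul_right hkey' (le_of_lt hT0)
    linarith
  -- first factor negative
  have hf1 : (-Real.cos φW) * Real.sin x - a * Real.sin φW * Real.cos x < 0 := by
    have h1 : (-Real.cos φW) * Real.sin x < Real.cos T * Real.sin x :=
      mul_lt_mul_of_pos_right hcT hsx
    have h3 : (a * Real.cos x) * Real.sin T < (a * Real.cos x) * Real.sin φW :=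
      mul_lt_mul_of_pos_left hsT (mul_pos ha0 hcx)
    nlinarith [h1, h3, hkey]
  -- second factor negative
  have hf2 : a * (-Real.cos φW) * Real.sin x - Real.sin φW * Real.cos x < 0 := by
    have hsφ : 0 < Real.sin φW := hsT0.trans hsT
    have h4 : a * ((-Real.cos φW) * Real.sin x) < a * (a * Real.sin φW * Real.cos x) :=
      mul_lt_mul_of_pos_left (by linarith) ha0
    have h5 : (0:ℝ) < (1 - a ^ 2) * (Real.sin φW * Real.cos x) :=
      mul_pos (by nlinarith) (mul_pos hsφ hcx)
    nlinarith [h4, h5]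
  -- the factorization identity
  have hid : F1 φW T a = -4 * ((-Real.cos φW) * Real.sin x - a * Real.sin φW * Real.cos x)
      * (a * (-Real.cos φW) * Real.sin x - Real.sin φW * Real.cos x) := by
    have h1 := Real.sin_sq_add_cos_sq x
    have h2 := Real.sin_sq_add_cos_sq φW
    simp only [F1]
    rw [show 2 * a * T = 2 * x by rw [hx]; ring, Real.sin_two_mul, Real.cos_two_mul,
      Real.sin_two_mul, Real.cos_two_mul]
    linear_combination (4 * a * Real.cos φW ^ 2) * h1 + (4 * a * Real.cos x ^ 2) * h2
  have hneg : F1 φW T a < 0 := by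
    rw [hid]
    nlinarith [mul_pos_of_neg_of_neg hf1 hf2]
  exact ne_of_lt hneg
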